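/- Let q be a prime power, k ≥ 2, n ≡ 0 (mod 2k), and b_k ∈ F_q^*. There exists a set A of polynomials over F_q of degree < n with |A| ≥ (α(Paley_k(F_q) ⊠ Paley_k(F_q)))^(n/(2k)) · q^(n(1-1/k)) such that A contains no two distinct elements differing by b_k·u^k for some u ∈ F_q[T]. -/
import Mathlib


/-- The independence number of a graph given by an adjacency relation. -/
noncomputable def indepNumber {V : Type*} (Adj : V → V → Prop) : ℕ :=
  sSup {n : ℕ | ∃ S : Finset V, (∀ x ∈ S, ∀ y ∈ S, x ≠ y → ¬ Adj x y) ∧ S.card = n}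

open Polynomial

namespace SarkozyAux
variable {K : Type*} [Field K]

theorem natTrailingDegree_pow (w : K[X]) (hw : w ≠ 0) (k : ℕ) :
    (w ^ k).natTrailingDegree = k * w.natTrailingDegree := by
  induction k with
  | zero => simp
  | succ k ih =>
      rw [pow_succ, Polynomial.natTrailingDegree_mul (pow_ne_zero _ hw) hw, ih]
      ring

theorem trailingCoeff_pow (w : K[X]) (k : ℕ) :
    (w ^ k).trailingCoeff = w.trailingCoeff ^ k := by
  induction k with
  | zero => simp [Polynomial.trailingCoeff]
  | succ k ih => rw [pow_succ, Polynomial.trailingCoeff_mul, ih, pow_succ]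

/-- value at slot `s` among the `2m` constrained coefficient slots -/
def pairVal {m : ℕ} (b : K) (u : Fin m → K × K) (s : ℕ) (hs : s < 2 * m) : K :=
  if h2 : s < m then b * (u ⟨s, h2⟩).1 else b * (u ⟨2 * m - 1 - s, by omega⟩).2

/-- coefficient function of the constructed polynomials -/
def coefF (k m : ℕ) (b : K) (u : Fin m → K × K) (f : Fin (2 * k * m) → K) (i : ℕ) : K :=
  if h : i < 2 * k * m then
    if hd : k ∣ i then
      pairVal b u (i / k)
        (by
          have hk0 : 0 < k := by
            rcases Nat.eq_zero_or_pos k with h0 | h0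
            · exact absurd h (by simp [h0])
            · exact h0
          exact (Nat.div_lt_iff_lt_mul hk0).mpr
            (by calc i < 2 * k * m := h
                  _ = 2 * m * k := by ring))
    else f ⟨i, h⟩
  else 0

noncomputable def polyOf (k m : ℕ) (b : K) (u : Fin m → K × K) (f : Fin (2 * k * m) → K) : K[X] :=
  ∑ i ∈ Finset.range (2 * k * m), Polynomial.monomial i (coefF k m b u f i)

theorem coeff_polyOf (k m : ℕ) (b : K) (u : Fin m → K × K) (f : Fin (2 * k * m) → K)
    (j : ℕ) : (polyOf k m b u f).coeff j = coefF k m b u f j := by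
  rw [polyOf, Polynomial.finset_sum_coeff]
  simp only [Polynomial.coeff_monomial]
  rw [Finset.sum_ite_eq' (Finset.range (2 * k * m)) j]
  split
  next h => rfl
  next h => rw [coefF, dif_neg (fun hc => h (Finset.mem_range.mpr hc))]

theorem degree_polyOf_lt (k m : ℕ) (b : K) (u : Fin m → K × K) (f : Fin (2 * k * m) → K) :
    (polyOf k m b u f).degree < (2 * k * m : ℕ) := by
  apply lt_of_le_of_lt (Polynomial.degree_sum_le _ _)
  rw [Finset.sup_lt_iff (by exact_mod_cast WithBot.bot_lt_coe _)]
  intro i hi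
  exact lt_of_le_of_lt (Polynomial.degree_monomial_le i _)
    (by exact_mod_cast Finset.mem_range.mp hi)

theorem coeff_polyOf_pair1 {k m : ℕ} (hk : 0 < k) (b : K) (u : Fin m → K × K)
    (f : Fin (2 * k * m) → K) (t : Fin m) :
    (polyOf k m b u f).coeff (k * t) = b * (u t).1 := by
  have ht := t.2
  rw [coeff_polyOf, coefF, dif_pos (by nlinarith [t.2]), dif_pos (dvd_mul_right k t)]
  rw [pairVal]
  rw [dif_pos (by rw [Nat.mul_div_cancel_left _ hk]; exact t.2)]
  have hdiv1 : k * (t : ℕ) / k = (t : ℕ) := Nat.mul_div_cancel_left _ hk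
  simp only [hdiv1]

theorem coeff_polyOf_pair2 {k m : ℕ} (hk : 0 < k) (b : K) (u : Fin m → K × K)
    (f : Fin (2 * k * m) → K) (t : Fin m) :
    (polyOf k m b u f).coeff (k * (2 * m - 1 - t)) = b * (u t).2 := by
  have ht := t.2
  have h1 : 2 * m - 1 - (t : ℕ) < 2 * m := by omega
  rw [coeff_polyOf, coefF, dif_pos (by nlinarith), dif_pos (dvd_mul_right k _)]
  rw [pairVal]
  have hdiv : k * (2 * m - 1 - (t : ℕ)) / k = 2 * m - 1 - (t : ℕ) :=
    Nat.mul_div_cancel_left _ hk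
  rw [dif_neg (by rw [hdiv]; omega)]
  have h2 : 2 * m - 1 - (2 * m - 1 - (t : ℕ)) = (t : ℕ) := by omega
  simp only [hdiv, h2]

theorem coeff_polyOf_free {k m : ℕ} (b : K) (u : Fin m → K × K)
    (f : Fin (2 * k * m) → K) (i : ℕ) (h : i < 2 * k * m) (hd : ¬ k ∣ i) :
    (polyOf k m b u f).coeff i = f ⟨i, h⟩ := by
  rw [coeff_polyOf, coefF, dif_pos h, dif_neg hd]

theorem card_filter_dvd (k m : ℕ) (hk : 0 < k) :
    (Finset.univ.filter fun i : Fin (2 * k * m) => k ∣ (i : ℕ)).card = 2 * m := by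
  have hmul : ∀ s : Fin (2 * m), k * (s : ℕ) < 2 * k * m := by
    intro s
    calc k * (s : ℕ) < k * (2 * m) := by
          exact (Nat.mul_lt_mul_left hk).mpr s.2
      _ = 2 * k * m := by ring
  have himg : (Finset.univ.filter fun i : Fin (2 * k * m) => k ∣ (i : ℕ)) =
      Finset.image (fun s : Fin (2 * m) => (⟨k * (s : ℕ), hmul s⟩ : Fin (2 * k * m)))
        Finset.univ := by
    ext i
    simp only [Finset.mem_filter, Finset.mem_univ, true_and, Finset.mem_image]
    constructor
    · rintro ⟨c, hc⟩
      have hc2 : c < 2 * m := by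
        by_contra hcon
        push_neg at hcon
        have : 2 * k * m ≤ k * c := by
          calc 2 * k * m = k * (2 * m) := by ring
            _ ≤ k * c := Nat.mul_le_mul_left k hcon
        have := i.2
        omega
      exact ⟨⟨c, hc2⟩, Fin.ext hc.symm⟩
    · rintro ⟨s, rfl⟩
      exact dvd_mul_right k s
  rw [himg, Finset.card_image_of_injective _ (fun s s' h => Fin.ext
      (Nat.eq_of_mul_eq_mul_left hk (by simpa [Fin.ext_iff] using h))),
    Finset.card_univ, Fintype.card_fin]

end SarkozyAux

/-- Improved lower bound for `F(u) = b_k u^k`: there is `A ⊆ P_{q,n}` of size at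
least `α(Paley_k(F_q) ⊠ Paley_k(F_q))^(n/(2k)) · q^(n(1-1/k))` with no two distinct
elements differing by `b_k · u^k`. -/
theorem sarkozy_kth_power_general_lower {K : Type*} [Field K] [Fintype K]
    (q k n : ℕ) (hq : Fintype.card K = q) (hk : 2 ≤ k) (hn : 2 * k ∣ n)
    (b : K) (hb : b ≠ 0) :
    ∃ A : Finset (Polynomial K), (∀ p ∈ A, p.degree < n) ∧
      indepNumber (fun x y : K × K => x ≠ y ∧
          (x.1 = y.1 ∨ ∃ z : K, x.1 - y.1 = z ^ k) ∧
          (x.2 = y.2 ∨ ∃ z : K, x.2 - y.2 = z ^ k)) ^ (n / (2 * k)) *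
        q ^ (n - n / k) ≤ A.card ∧
      ∀ p ∈ A, ∀ p' ∈ A, p ≠ p' →
        ¬ ∃ u : Polynomial K, p' - p = Polynomial.C b * u ^ k := by
  classical
  subst hq
  obtain ⟨m, rfl⟩ := hn
  have hk0 : 0 < k := by omega
  set Adj : K × K → K × K → Prop := fun x y : K × K => x ≠ y ∧
      (x.1 = y.1 ∨ ∃ z : K, x.1 - y.1 = z ^ k) ∧
      (x.2 = y.2 ∨ ∃ z : K, x.2 - y.2 = z ^ k) with hAdj
  -- a maximum independent set U
  have hmem : ∃ S : Finset (K × K), (∀ x ∈ S, ∀ y ∈ S, x ≠ y → ¬ Adj x y) ∧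
      S.card = indepNumber Adj := by
    have h1 : ({n : ℕ | ∃ S : Finset (K × K),
        (∀ x ∈ S, ∀ y ∈ S, x ≠ y → ¬ Adj x y) ∧ S.card = n}).Nonempty :=
      ⟨0, ∅, by simp, by simp⟩
    have h2 : BddAbove {n : ℕ | ∃ S : Finset (K × K),
        (∀ x ∈ S, ∀ y ∈ S, x ≠ y → ¬ Adj x y) ∧ S.card = n} := by
      refine ⟨Fintype.card (K × K), ?_⟩
      rintro s ⟨S, -, rfl⟩
      exact (Finset.card_le_univ S).trans_eq (Finset.card_univ)
    have := Nat.sSup_mem h1 h2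
    obtain ⟨S, hS, hScard⟩ := this
    exact ⟨S, hS, hScard⟩
  obtain ⟨U, hUind, hUcard⟩ := hmem
  -- the construction
  set D1 : Finset (Fin m → K × K) := Fintype.piFinset fun _ => U with hD1
  set D2 : Finset (Fin (2 * k * m) → K) :=
    Fintype.piFinset fun i : Fin (2 * k * m) =>
      if k ∣ (i : ℕ) then ({0} : Finset K) else Finset.univ with hD2
  set A : Finset (Polynomial K) :=
    (D1 ×ˢ D2).image fun uf => SarkozyAux.polyOf k m b uf.1 uf.2 with hA
  have hinj : Set.InjOn (fun uf : (Fin m → K × K) × (Fin (2 * k * m) → K) =>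
      SarkozyAux.polyOf k m b uf.1 uf.2) ↑(D1 ×ˢ D2) := by
    rintro ⟨u, f⟩ huf ⟨u', f'⟩ huf' heq
    simp only [Finset.coe_product, Set.mem_prod, Finset.mem_coe] at huf huf'
    have hu : u = u' := by
      funext t
      have h1 := congrArg (fun r => Polynomial.coeff r (k * t)) heq
      have h2 := congrArg (fun r => Polynomial.coeff r (k * (2 * m - 1 - t))) heq
      simp only [SarkozyAux.coeff_polyOf_pair1 hk0 b _ _ t,
        SarkozyAux.coeff_polyOf_pair2 hk0 b _ _ t] at h1 h2
      exact Prod.ext (mul_left_cancel₀ hb h1) (mul_left_cancel₀ hb h2)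
    have hf : f = f' := by
      funext i
      by_cases hd : k ∣ (i : ℕ)
      · have m1 := Fintype.mem_piFinset.mp huf.2 i
        have m2 := Fintype.mem_piFinset.mp huf'.2 i
        rw [if_pos hd] at m1 m2
        rw [Finset.mem_singleton.mp m1, Finset.mem_singleton.mp m2]
      · have h1 := congrArg (fun r => Polynomial.coeff r (i : ℕ)) heq
        simp only [SarkozyAux.coeff_polyOf_free b _ _ (i : ℕ) i.2 hd] at h1
        exact h1
    cases hu; cases hf; rfl
  have hdeg : ∀ p ∈ A, p.degree < ((2 * k * m : ℕ) : WithBot ℕ) := by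
    intro p hp
    obtain ⟨uf, -, rfl⟩ := Finset.mem_image.mp hp
    exact SarkozyAux.degree_polyOf_lt k m b uf.1 uf.2
  refine ⟨A, hdeg, ?_, ?_⟩
  · -- cardinality bound
    have hcardA : A.card = U.card ^ m * (Fintype.card K) ^ (2 * k * m - 2 * m) := by
      rw [hA, Finset.card_image_of_injOn hinj, Finset.card_product]
      congr 1
      · rw [hD1, Fintype.card_piFinset]
        simp [Finset.prod_const]
      · rw [hD2, Fintype.card_piFinset]
        have hc : ∀ i : Fin (2 * k * m),
            (if k ∣ (i : ℕ) then ({0} : Finset K) else Finset.univ).card =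
            if k ∣ (i : ℕ) then 1 else Fintype.card K := by
          intro i; split <;> simp
        rw [Finset.prod_congr rfl fun i _ => hc i, Finset.prod_ite]
        simp only [Finset.prod_const_one, Finset.prod_const, one_mul]
        congr 1
        have htot := Finset.card_filter_add_card_filter_not
          (s := (Finset.univ : Finset (Fin (2 * k * m)))) (p := fun i => k ∣ (i : ℕ))
        rw [SarkozyAux.card_filter_dvd k m hk0] at htot
        simp only [Finset.card_univ, Fintype.card_fin] at htot
        omega
    have e1 : 2 * k * m / (2 * k) = m := Nat.mul_div_cancel_left m (by omega)
    have e2 : 2 * k * m / k = 2 * m := by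
      rw [show 2 * k * m = k * (2 * m) by ring, Nat.mul_div_cancel_left _ hk0]
    rw [e1, e2, ← hUcard, hcardA]
  · -- no two distinct elements differ by b * u^k
    rintro p hp p' hp' hne ⟨w, hw⟩
    obtain ⟨⟨u, f⟩, huf, rfl⟩ := Finset.mem_image.mp hp
    obtain ⟨⟨u', f'⟩, huf', rfl⟩ := Finset.mem_image.mp hp'
    rw [Finset.mem_product] at huf huf'
    have hw0 : w ≠ 0 := by
      rintro rfl
      rw [zero_pow (by omega : k ≠ 0), mul_zero, sub_eq_zero] at hw
      exact hne hw.symm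
    set W := w ^ k with hW
    have hWne : W ≠ 0 := pow_ne_zero _ hw0
    set d := w.natDegree with hdd
    set e := w.natTrailingDegree with hee
    have hed : e ≤ d := Polynomial.natTrailingDegree_le_natDegree w
    have hWd : W.natDegree = k * d := by rw [hW, Polynomial.natDegree_pow]
    have hWe : W.natTrailingDegree = k * e := SarkozyAux.natTrailingDegree_pow w hw0 k
    have hLne : w.leadingCoeff ^ k ≠ 0 :=
      pow_ne_zero _ (Polynomial.leadingCoeff_ne_zero.mpr hw0)
    have hTne : w.trailingCoeff ^ k ≠ 0 :=
      pow_ne_zero _ (fun h => hw0 (Polynomial.trailingCoeff_eq_zero.mp h))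
    have hLcoeff : W.coeff (k * d) = w.leadingCoeff ^ k := by
      rw [← hWd, Polynomial.coeff_natDegree, hW, Polynomial.leadingCoeff_pow]
    have hTcoeff : W.coeff (k * e) = w.trailingCoeff ^ k := by
      rw [← hWe, ← Polynomial.trailingCoeff, SarkozyAux.trailingCoeff_pow]
    -- degree bound : k * d < 2 * k * m
    have hDne : SarkozyAux.polyOf k m b u' f' - SarkozyAux.polyOf k m b u f ≠ 0 :=
      sub_ne_zero.mpr (Ne.symm hne)
    have hdegD : (SarkozyAux.polyOf k m b u' f' - SarkozyAux.polyOf k m b u f).degree <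
        ((2 * k * m : ℕ) : WithBot ℕ) :=
      lt_of_le_of_lt (Polynomial.degree_sub_le _ _)
        (max_lt (SarkozyAux.degree_polyOf_lt k m b u' f')
          (SarkozyAux.degree_polyOf_lt k m b u f))
    have hkd : k * d < 2 * k * m := by
      have h1 : (SarkozyAux.polyOf k m b u' f' - SarkozyAux.polyOf k m b u f).natDegree
          < 2 * k * m := (Polynomial.natDegree_lt_iff_degree_lt hDne).mpr hdegD
      rw [hw, Polynomial.natDegree_C_mul hb, hWd] at h1
      exact h1
    have hd2m : d < 2 * m := by
      by_contra hcon
      push_neg at hcon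
      have : 2 * k * m ≤ k * d :=
        le_trans (le_of_eq (by ring)) (Nat.mul_le_mul_left k hcon)
      omega
    -- coefficient equations
    have eq1 : ∀ t : Fin m, (u' t).1 - (u t).1 = W.coeff (k * t) := by
      intro t
      have h1 := congrArg (fun r => Polynomial.coeff r (k * t)) hw
      simp only [Polynomial.coeff_sub, Polynomial.coeff_C_mul,
        SarkozyAux.coeff_polyOf_pair1 hk0 b _ _ t] at h1
      rw [← mul_sub] at h1
      exact mul_left_cancel₀ hb h1
    have eq2 : ∀ t : Fin m, (u' t).2 - (u t).2 = W.coeff (k * (2 * m - 1 - t)) := by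
      intro t
      have h1 := congrArg (fun r => Polynomial.coeff r (k * (2 * m - 1 - t))) hw
      simp only [Polynomial.coeff_sub, Polynomial.coeff_C_mul,
        SarkozyAux.coeff_polyOf_pair2 hk0 b _ _ t] at h1
      rw [← mul_sub] at h1
      exact mul_left_cancel₀ hb h1
    -- the finisher
    have key : ∀ t : Fin m,
        ((u' t).1 = (u t).1 ∨ ∃ z : K, (u' t).1 - (u t).1 = z ^ k) →
        ((u' t).2 = (u t).2 ∨ ∃ z : K, (u' t).2 - (u t).2 = z ^ k) →
        u' t ≠ u t → False := by
      intro t c1 c2 hne'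
      have hx : u' t ∈ U := Fintype.mem_piFinset.mp huf'.1 t
      have hy : u t ∈ U := Fintype.mem_piFinset.mp huf.1 t
      exact hUind _ hx _ hy hne' ⟨hne', c1, c2⟩
    have tri : e + d + 2 ≤ 2 * m ∨ e + d + 1 = 2 * m ∨ 2 * m ≤ e + d := by omega
    rcases tri with htri | htri | htri
    · -- e + d ≤ 2m - 2 : use t = e, second slot is zero
      have hem : e < m := by omega
      set t : Fin m := ⟨e, hem⟩ with htdef
      have hcoef1 : (u' t).1 - (u t).1 = w.trailingCoeff ^ k := by
        rw [eq1 t]; exact hTcoeff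
      have hcoef2 : (u' t).2 - (u t).2 = 0 := by
        rw [eq2 t]
        apply Polynomial.coeff_eq_zero_of_natDegree_lt
        rw [hWd]
        have : d < 2 * m - 1 - e := by omega
        exact (Nat.mul_lt_mul_left hk0).mpr (by exact this)
      exact key t (Or.inr ⟨w.trailingCoeff, hcoef1⟩) (Or.inl (sub_eq_zero.mp hcoef2))
        (fun h => hTne (by rw [← hcoef1, h, sub_self]))
    · -- e + d = 2m - 1 : use t = e, both slots are k-th powers
      have hem : e < m := by omega
      set t : Fin m := ⟨e, hem⟩ with htdef
      have hd' : 2 * m - 1 - (t : ℕ) = d := by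
        simp only [htdef]; omega
      have hcoef1 : (u' t).1 - (u t).1 = w.trailingCoeff ^ k := by
        rw [eq1 t]; exact hTcoeff
      have hcoef2 : (u' t).2 - (u t).2 = w.leadingCoeff ^ k := by
        rw [eq2 t, hd']; exact hLcoeff
      exact key t (Or.inr ⟨w.trailingCoeff, hcoef1⟩) (Or.inr ⟨w.leadingCoeff, hcoef2⟩)
        (fun h => hTne (by rw [← hcoef1, h, sub_self]))
    · -- e + d ≥ 2m : use t = 2m-1-d, first slot is zero
      have hdm : m ≤ d := by omega
      set t : Fin m := ⟨2 * m - 1 - d, by omega⟩ with htdef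
      have hd' : 2 * m - 1 - (t : ℕ) = d := by
        simp only [htdef]; omega
      have hcoef2 : (u' t).2 - (u t).2 = w.leadingCoeff ^ k := by
        rw [eq2 t, hd']; exact hLcoeff
      have hcoef1 : (u' t).1 - (u t).1 = 0 := by
        rw [eq1 t]
        apply Polynomial.coeff_eq_zero_of_lt_natTrailingDegree
        rw [hWe]
        have : (t : ℕ) < e := by simp only [htdef]; omega
        exact (Nat.mul_lt_mul_left hk0).mpr this
      exact key t (Or.inl (sub_eq_zero.mp hcoef1)) (Or.inr ⟨w.leadingCoeff, hcoef2⟩)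
        (fun h => hLne (by rw [← hcoef2, h, sub_self]))
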